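/- arXiv:2206.03873 — 3 statements merged into one kernel-verified Lean document; each statement's English description precedes it below -/
import Mathlib

section
/- (Gevrey product estimate) Let r ≥ 0 and s > 1/2. There is a constant C = C(r,s) such that for all f, g in the Gevrey class, |fg|_{X^r} ≤ C |f|_{X^s} |g|_{X^r} + C |f|_{X^r} |g|_{X^s}, where |f|_{X^r} = ‖⟨k⟩^r e^{Φ(t,k)} f̂(k)‖_{ℓ²(ℤ)} and Φ(t,k) = τ⟨k⟩^{2/3} with τ ≥ 0. -/
open MeasureTheory
open scoped NNReal ENNReal

/-- Japanese bracket `⟨k⟩ = (1+k²)^(1/2)` for `k : ℤ`. -/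
noncomputable def jap (k : ℤ) : ℝ := Real.sqrt (1 + (k : ℝ) ^ 2)

/-- The Gevrey `X^r` norm of a sequence of Fourier coefficients `f : ℤ → ℂ`,
with weight `e^{τ⟨k⟩^(2/3)}`:  `|f|_{X^r} = ‖⟨k⟩^r e^{τ⟨k⟩^(2/3)} f̂(k)‖_{ℓ²}`. -/
noncomputable def Xnorm (τ r : ℝ) (f : ℤ → ℂ) : ℝ :=
  Real.sqrt (∑' k : ℤ,
    (jap k ^ r * Real.exp (τ * jap k ^ ((2 : ℝ) / 3)) * ‖f k‖) ^ 2)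

/-- Fourier coefficients of a product: discrete convolution. -/
noncomputable def conv (f g : ℤ → ℂ) (k : ℤ) : ℂ := ∑' ℓ : ℤ, f (k - ℓ) * g ℓ

/-! ### Auxiliary lemmas -/

lemma jap_one_le (k : ℤ) : 1 ≤ jap k := by
  have h := Real.sqrt_le_sqrt (show (1:ℝ) ≤ 1 + (k:ℝ)^2 by nlinarith [sq_nonneg ((k:ℝ))])
  simpa [jap] using h

lemma jap_pos (k : ℤ) : 0 < jap k := lt_of_lt_of_le one_pos (jap_one_le k)

lemma jap_triangle (a b : ℤ) : jap (a + b) ≤ jap a + jap b := by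
  have hA := Real.sq_sqrt (by positivity : (0:ℝ) ≤ 1 + (a:ℝ)^2)
  have hB := Real.sq_sqrt (by positivity : (0:ℝ) ≤ 1 + (b:ℝ)^2)
  have hA0 := Real.sqrt_nonneg (1 + (a:ℝ)^2)
  have hB0 := Real.sqrt_nonneg (1 + (b:ℝ)^2)
  have hab : (a:ℝ) * b ≤ Real.sqrt (1 + (a:ℝ)^2) * Real.sqrt (1 + (b:ℝ)^2) := by
    nlinarith [sq_nonneg ((a:ℝ)*b - Real.sqrt (1 + (a:ℝ)^2) * Real.sqrt (1 + (b:ℝ)^2)),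
      sq_nonneg ((a:ℝ)*b + Real.sqrt (1 + (a:ℝ)^2) * Real.sqrt (1 + (b:ℝ)^2)),
      mul_nonneg hA0 hB0]
  have key : 1 + ((a:ℝ) + b)^2 ≤ (Real.sqrt (1 + (a:ℝ)^2) + Real.sqrt (1 + (b:ℝ)^2))^2 := by
    nlinarith
  calc jap (a + b) = Real.sqrt (1 + ((a:ℝ)+b)^2) := by rw [jap]; push_cast; ring_nf
    _ ≤ Real.sqrt ((Real.sqrt (1 + (a:ℝ)^2) + Real.sqrt (1 + (b:ℝ)^2))^2) := Real.sqrt_le_sqrt key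
    _ = jap a + jap b := by rw [Real.sqrt_sq (by positivity)]; rfl

lemma jap_triangle' (k ℓ : ℤ) : jap k ≤ jap (k - ℓ) + jap ℓ := by
  have := jap_triangle (k - ℓ) ℓ
  rwa [sub_add_cancel] at this

lemma real_rpow_subadd {x y : ℝ} (hx : 0 ≤ x) (hy : 0 ≤ y) {p : ℝ} (hp : 0 ≤ p) (hp1 : p ≤ 1) :
    (x + y) ^ p ≤ x ^ p + y ^ p := by
  rw [← Real.coe_toNNReal x hx, ← Real.coe_toNNReal y hy, ← NNReal.coe_add,
    ← NNReal.coe_rpow, ← NNReal.coe_rpow, ← NNReal.coe_rpow, ← NNReal.coe_add, NNReal.coe_le_coe]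
  exact NNReal.rpow_add_le_add_rpow _ _ hp hp1

lemma jap_twothirds_subadd (k ℓ : ℤ) :
    jap k ^ ((2:ℝ)/3) ≤ jap (k - ℓ) ^ ((2:ℝ)/3) + jap ℓ ^ ((2:ℝ)/3) := by
  calc jap k ^ ((2:ℝ)/3) ≤ (jap (k - ℓ) + jap ℓ) ^ ((2:ℝ)/3) :=
        Real.rpow_le_rpow (jap_pos k).le (jap_triangle' k ℓ) (by norm_num)
    _ ≤ _ := real_rpow_subadd (jap_pos _).le (jap_pos _).le (by norm_num) (by norm_num)

lemma exp_weight {τ : ℝ} (hτ : 0 ≤ τ) (k ℓ : ℤ) :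
    Real.exp (τ * jap k ^ ((2:ℝ)/3)) ≤
      Real.exp (τ * jap (k - ℓ) ^ ((2:ℝ)/3)) * Real.exp (τ * jap ℓ ^ ((2:ℝ)/3)) := by
  rw [← Real.exp_add]
  apply Real.exp_le_exp.mpr
  have := jap_twothirds_subadd k ℓ
  nlinarith

lemma jap_rpow_bound {r : ℝ} (hr : 0 ≤ r) (k ℓ : ℤ) :
    jap k ^ r ≤ 2 ^ r * (jap (k - ℓ) ^ r + jap ℓ ^ r) := by
  have hmax : jap k ≤ 2 * max (jap (k - ℓ)) (jap ℓ) := by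
    have h := jap_triangle' k ℓ
    have := le_max_left (jap (k - ℓ)) (jap ℓ)
    have := le_max_right (jap (k - ℓ)) (jap ℓ)
    linarith
  calc jap k ^ r ≤ (2 * max (jap (k - ℓ)) (jap ℓ)) ^ r :=
        Real.rpow_le_rpow (jap_pos k).le hmax hr
    _ = 2 ^ r * max (jap (k - ℓ)) (jap ℓ) ^ r := by
        rw [Real.mul_rpow (by norm_num) (le_max_of_le_left (jap_pos _).le)]
    _ ≤ 2 ^ r * (jap (k - ℓ) ^ r + jap ℓ ^ r) := by
        gcongr
        rcases max_cases (jap (k - ℓ)) (jap ℓ) with ⟨he, _⟩ | ⟨he, _⟩ <;> rw [he] <;>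
          [nlinarith [Real.rpow_nonneg (jap_pos ℓ).le r];
           nlinarith [Real.rpow_nonneg (jap_pos (k-ℓ)).le r]]

lemma weight_bound {r τ : ℝ} (hr : 0 ≤ r) (hτ : 0 ≤ τ) (k ℓ : ℤ) :
    jap k ^ r * Real.exp (τ * jap k ^ ((2:ℝ)/3)) ≤
      2 ^ r * ((jap (k - ℓ) ^ r + jap ℓ ^ r) *
        (Real.exp (τ * jap (k - ℓ) ^ ((2:ℝ)/3)) * Real.exp (τ * jap ℓ ^ ((2:ℝ)/3)))) := by
  have h1 := jap_rpow_bound hr k ℓ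
  have h2 := exp_weight hτ k ℓ
  have e1 : (0:ℝ) < Real.exp (τ * jap k ^ ((2:ℝ)/3)) := Real.exp_pos _
  have j1 : (0:ℝ) ≤ jap k ^ r := Real.rpow_nonneg (jap_pos k).le r
  calc jap k ^ r * Real.exp (τ * jap k ^ ((2:ℝ)/3))
      ≤ (2 ^ r * (jap (k - ℓ) ^ r + jap ℓ ^ r)) *
        (Real.exp (τ * jap (k - ℓ) ^ ((2:ℝ)/3)) * Real.exp (τ * jap ℓ ^ ((2:ℝ)/3))) := by
        apply mul_le_mul h1 h2 e1.le
        exact mul_nonneg (by positivity)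
          (add_nonneg (Real.rpow_nonneg (jap_pos _).le r) (Real.rpow_nonneg (jap_pos _).le r))
    _ = _ := by ring

lemma summable_jap_neg {s : ℝ} (hs : 1/2 < s) : Summable (fun ℓ : ℤ => jap ℓ ^ (-(2*s))) := by
  have hb : 1 < 2 * s := by linarith
  have h1 : Summable (fun ℓ : ℤ => |(ℓ:ℝ)| ^ (-(2*s))) := Real.summable_abs_int_rpow hb
  have h2 : Summable (fun ℓ : ℤ => if ℓ = 0 then (1:ℝ) else 0) :=
    (hasSum_ite_eq (0:ℤ) (1:ℝ)).summable
  refine Summable.of_nonneg_of_le (fun ℓ => Real.rpow_nonneg (jap_pos ℓ).le _)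
    (fun ℓ => ?_) (h1.add h2)
  rcases eq_or_ne ℓ 0 with rfl | hℓ
  · simp only [if_pos rfl]
    have : jap 0 = 1 := by simp [jap]
    rw [this, Real.one_rpow]
    rw [show |((0:ℤ):ℝ)| = 0 by simp, Real.zero_rpow (show -(2*s) ≠ 0 by nlinarith), zero_add]
    simp
  · rw [if_neg hℓ, add_zero]
    have habs : (1:ℝ) ≤ |(ℓ:ℝ)| := by
      rw [← Int.cast_abs]
      exact_mod_cast Int.one_le_abs (by simpa using hℓ)
    have hle : |(ℓ:ℝ)| ≤ jap ℓ := by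
      have := Real.sqrt_le_sqrt (show (ℓ:ℝ)^2 ≤ 1 + (ℓ:ℝ)^2 by linarith)
      rwa [Real.sqrt_sq_eq_abs] at this
    exact Real.rpow_le_rpow_of_nonpos (by linarith) hle (by nlinarith)

/-! ### `ℝ≥0∞` lemmas: Cauchy–Schwarz, Minkowski, Young -/

lemma enn_CS (u v : ℤ → ℝ≥0∞) :
    ∑' ℓ : ℤ, u ℓ * v ℓ ≤
      (∑' ℓ : ℤ, u ℓ ^ (2:ℝ)) ^ ((1:ℝ)/2) * (∑' ℓ : ℤ, v ℓ ^ (2:ℝ)) ^ ((1:ℝ)/2) := by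
  have h2 : Real.HolderConjugate 2 2 := Real.holderConjugate_iff.mpr ⟨one_lt_two, by norm_num⟩
  have := ENNReal.lintegral_mul_le_Lp_mul_Lq (Measure.count (α := ℤ)) h2
    (measurable_of_countable u).aemeasurable (measurable_of_countable v).aemeasurable
  simpa [MeasureTheory.lintegral_count] using this

lemma enn_minkowski (u v : ℤ → ℝ≥0∞) :
    (∑' k : ℤ, (u k + v k) ^ (2:ℝ)) ^ ((1:ℝ)/2) ≤
      (∑' k : ℤ, u k ^ (2:ℝ)) ^ ((1:ℝ)/2) + (∑' k : ℤ, v k ^ (2:ℝ)) ^ ((1:ℝ)/2) := by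
  have := ENNReal.lintegral_Lp_add_le (μ := Measure.count (α := ℤ))
    (measurable_of_countable u).aemeasurable (measurable_of_countable v).aemeasurable
    (one_le_two (α := ℝ))
  simpa [MeasureTheory.lintegral_count] using this

lemma enn_young (u v : ℤ → ℝ≥0∞) :
    ∑' k : ℤ, (∑' ℓ : ℤ, u (k - ℓ) * v ℓ) ^ (2:ℝ) ≤
      (∑' m : ℤ, u m ^ (2:ℝ)) * (∑' m : ℤ, v m) ^ (2:ℝ) := by
  have step1 : ∀ k : ℤ, (∑' ℓ : ℤ, u (k - ℓ) * v ℓ) ^ (2:ℝ) ≤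
      (∑' ℓ : ℤ, u (k - ℓ) ^ (2:ℝ) * v ℓ) * (∑' ℓ : ℤ, v ℓ) := by
    intro k
    have hCS := enn_CS (fun ℓ => u (k - ℓ) * v ℓ ^ ((1:ℝ)/2)) (fun ℓ => v ℓ ^ ((1:ℝ)/2))
    have hrw : ∀ ℓ : ℤ, (u (k - ℓ) * v ℓ ^ ((1:ℝ)/2)) * v ℓ ^ ((1:ℝ)/2) = u (k - ℓ) * v ℓ := by
      intro ℓ
      rw [mul_assoc, ← ENNReal.rpow_add_of_nonneg _ _ (by norm_num) (by norm_num)]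
      norm_num
    have hrw2 : ∀ ℓ : ℤ, (u (k - ℓ) * v ℓ ^ ((1:ℝ)/2)) ^ (2:ℝ) = u (k - ℓ) ^ (2:ℝ) * v ℓ := by
      intro ℓ
      rw [ENNReal.mul_rpow_of_nonneg _ _ (by norm_num), ← ENNReal.rpow_mul]
      norm_num
    have hrw3 : ∀ ℓ : ℤ, (v ℓ ^ ((1:ℝ)/2)) ^ (2:ℝ) = v ℓ := by
      intro ℓ; rw [← ENNReal.rpow_mul]; norm_num
    simp only [hrw, hrw2, hrw3] at hCS
    calc (∑' ℓ : ℤ, u (k - ℓ) * v ℓ) ^ (2:ℝ)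
        ≤ ((∑' ℓ : ℤ, u (k - ℓ) ^ (2:ℝ) * v ℓ) ^ ((1:ℝ)/2) *
            (∑' ℓ : ℤ, v ℓ) ^ ((1:ℝ)/2)) ^ (2:ℝ) := by
          exact ENNReal.rpow_le_rpow hCS (by norm_num)
      _ = (∑' ℓ : ℤ, u (k - ℓ) ^ (2:ℝ) * v ℓ) * (∑' ℓ : ℤ, v ℓ) := by
          rw [ENNReal.mul_rpow_of_nonneg _ _ (by norm_num), ← ENNReal.rpow_mul, ← ENNReal.rpow_mul]
          norm_num
  calc ∑' k : ℤ, (∑' ℓ : ℤ, u (k - ℓ) * v ℓ) ^ (2:ℝ)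
      ≤ ∑' k : ℤ, (∑' ℓ : ℤ, u (k - ℓ) ^ (2:ℝ) * v ℓ) * (∑' ℓ : ℤ, v ℓ) :=
        ENNReal.tsum_le_tsum step1
    _ = (∑' ℓ : ℤ, v ℓ) * ∑' k : ℤ, ∑' ℓ : ℤ, u (k - ℓ) ^ (2:ℝ) * v ℓ := by
        rw [ENNReal.tsum_mul_right, mul_comm]
    _ = (∑' ℓ : ℤ, v ℓ) * ∑' ℓ : ℤ, v ℓ * ∑' k : ℤ, u (k - ℓ) ^ (2:ℝ) := by
        rw [ENNReal.tsum_comm]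
        congr 1
        refine tsum_congr fun ℓ => ?_
        rw [ENNReal.tsum_mul_right, mul_comm]
    _ = (∑' ℓ : ℤ, v ℓ) * ∑' ℓ : ℤ, v ℓ * ∑' m : ℤ, u m ^ (2:ℝ) := by
        congr 1
        refine tsum_congr fun ℓ => ?_
        congr 1
        exact Equiv.tsum_eq (Equiv.subRight ℓ) (fun m => u m ^ (2:ℝ))
    _ = (∑' m : ℤ, u m ^ (2:ℝ)) * (∑' m : ℤ, v m) ^ (2:ℝ) := by
        have hsq : ∀ x : ℝ≥0∞, x ^ (2:ℝ) = x * x := fun x => by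
          rw [show (2:ℝ) = ((2:ℕ):ℝ) by norm_num, ENNReal.rpow_natCast]; ring
        rw [ENNReal.tsum_mul_right, hsq]
        ring

/-! ### Weighted ℓ² data in `ℝ≥0∞` -/

/-- The Gevrey weight. -/
noncomputable def wgt (τ ρ : ℝ) (m : ℤ) : ℝ := jap m ^ ρ * Real.exp (τ * jap m ^ ((2:ℝ)/3))

lemma wgt_pos (τ ρ : ℝ) (m : ℤ) : 0 < wgt τ ρ m :=
  mul_pos (Real.rpow_pos_of_pos (jap_pos m) ρ) (Real.exp_pos _)

/-- The weighted coefficient sequence, in `ℝ≥0∞`. -/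
noncomputable def eA (τ ρ : ℝ) (f : ℤ → ℂ) (m : ℤ) : ℝ≥0∞ :=
  ENNReal.ofReal (wgt τ ρ m * ‖f m‖)

lemma eA_sq (τ ρ : ℝ) (f : ℤ → ℂ) (m : ℤ) :
    eA τ ρ f m ^ (2:ℝ) = ENNReal.ofReal ((wgt τ ρ m * ‖f m‖) ^ 2) := by
  rw [eA, show (2:ℝ) = ((2:ℕ):ℝ) by norm_num, ENNReal.rpow_natCast,
    ENNReal.ofReal_pow (mul_nonneg (wgt_pos τ ρ m).le (norm_nonneg _))]

/-- The ℓ² norm of the weighted sequence equals (the `ofReal` of) the X-norm. -/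
lemma eA_l2 (τ ρ : ℝ) (f : ℤ → ℂ)
    (h : Summable (fun k : ℤ => (wgt τ ρ k * ‖f k‖) ^ 2)) :
    (∑' k : ℤ, eA τ ρ f k ^ (2:ℝ)) ^ ((1:ℝ)/2) = ENNReal.ofReal (Xnorm τ ρ f) := by
  have h1 : ∑' k : ℤ, eA τ ρ f k ^ (2:ℝ) =
      ENNReal.ofReal (∑' k : ℤ, (wgt τ ρ k * ‖f k‖) ^ 2) := by
    rw [ENNReal.ofReal_tsum_of_nonneg (fun k => sq_nonneg _) h]
    exact tsum_congr fun k => eA_sq τ ρ f k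
  rw [h1, Xnorm, Real.sqrt_eq_rpow,
    ENNReal.ofReal_rpow_of_nonneg (tsum_nonneg fun k => sq_nonneg _) (by norm_num)]
  rfl

/-- Cauchy–Schwarz bound for the ℓ¹ norm of the order-0 weighted sequence. -/
lemma eA_l1 {s : ℝ} (hs : 1/2 < s) (τ : ℝ) (f : ℤ → ℂ) :
    ∑' ℓ : ℤ, eA τ 0 f ℓ ≤
      (∑' ℓ : ℤ, (ENNReal.ofReal (jap ℓ)) ^ (-(2*s))) ^ ((1:ℝ)/2) *
        (∑' ℓ : ℤ, eA τ s f ℓ ^ (2:ℝ)) ^ ((1:ℝ)/2) := by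
  have hfac : ∀ ℓ : ℤ, eA τ 0 f ℓ = (ENNReal.ofReal (jap ℓ)) ^ (-s) * eA τ s f ℓ := by
    intro ℓ
    have hJ0 : ENNReal.ofReal (jap ℓ) ≠ 0 := by
      simp [ENNReal.ofReal_eq_zero, not_le, jap_pos ℓ]
    have hJt : ENNReal.ofReal (jap ℓ) ≠ ⊤ := ENNReal.ofReal_ne_top
    have hsplit : eA τ s f ℓ = (ENNReal.ofReal (jap ℓ)) ^ s * eA τ 0 f ℓ := by
      rw [eA, eA, wgt, wgt, Real.rpow_zero, one_mul,
        show jap ℓ ^ s * Real.exp (τ * jap ℓ ^ ((2:ℝ)/3)) * ‖f ℓ‖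
          = jap ℓ ^ s * (Real.exp (τ * jap ℓ ^ ((2:ℝ)/3)) * ‖f ℓ‖) by ring,
        ENNReal.ofReal_mul (Real.rpow_nonneg (jap_pos ℓ).le s),
        ENNReal.ofReal_rpow_of_pos (jap_pos ℓ)]
    rw [hsplit, ← mul_assoc, ← ENNReal.rpow_add _ _ hJ0 hJt]
    norm_num
  calc ∑' ℓ : ℤ, eA τ 0 f ℓ = ∑' ℓ : ℤ, (ENNReal.ofReal (jap ℓ)) ^ (-s) * eA τ s f ℓ :=
        tsum_congr hfac
    _ ≤ (∑' ℓ : ℤ, ((ENNReal.ofReal (jap ℓ)) ^ (-s)) ^ (2:ℝ)) ^ ((1:ℝ)/2) *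
          (∑' ℓ : ℤ, eA τ s f ℓ ^ (2:ℝ)) ^ ((1:ℝ)/2) := enn_CS _ _
    _ = _ := by
        congr 1
        congr 1
        refine tsum_congr fun ℓ => ?_
        rw [← ENNReal.rpow_mul]
        norm_num
        ring_nf

/-- Per-summand weighted bound. -/
lemma per_ell {r τ : ℝ} (hr : 0 ≤ r) (hτ : 0 ≤ τ) (f g : ℤ → ℂ) (k ℓ : ℤ) :
    ENNReal.ofReal (wgt τ r k * (‖f (k - ℓ)‖ * ‖g ℓ‖)) ≤
      ENNReal.ofReal (2 ^ r) *
        (eA τ r f (k - ℓ) * eA τ 0 g ℓ + eA τ 0 f (k - ℓ) * eA τ r g ℓ) := by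
  have habs : (0:ℝ) ≤ ‖f (k - ℓ)‖ * ‖g ℓ‖ :=
    mul_nonneg (norm_nonneg _) (norm_nonneg _)
  have h1 : wgt τ r k * (‖f (k - ℓ)‖ * ‖g ℓ‖) ≤
      2 ^ r * ((wgt τ r (k - ℓ) * ‖f (k - ℓ)‖) * (wgt τ 0 ℓ * ‖g ℓ‖) +
        (wgt τ 0 (k - ℓ) * ‖f (k - ℓ)‖) * (wgt τ r ℓ * ‖g ℓ‖)) := by
    have hw := weight_bound hr hτ k ℓ
    have := mul_le_mul_of_nonneg_right hw habs
    calc wgt τ r k * (‖f (k - ℓ)‖ * ‖g ℓ‖)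
        ≤ (2 ^ r * ((jap (k - ℓ) ^ r + jap ℓ ^ r) *
            (Real.exp (τ * jap (k - ℓ) ^ ((2:ℝ)/3)) * Real.exp (τ * jap ℓ ^ ((2:ℝ)/3))))) *
            (‖f (k - ℓ)‖ * ‖g ℓ‖) := this
      _ = _ := by simp only [wgt, Real.rpow_zero, one_mul]; ring
  calc ENNReal.ofReal (wgt τ r k * (‖f (k - ℓ)‖ * ‖g ℓ‖))
      ≤ ENNReal.ofReal (2 ^ r *
          ((wgt τ r (k - ℓ) * ‖f (k - ℓ)‖) * (wgt τ 0 ℓ * ‖g ℓ‖) +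
          (wgt τ 0 (k - ℓ) * ‖f (k - ℓ)‖) * (wgt τ r ℓ * ‖g ℓ‖))) :=
        ENNReal.ofReal_le_ofReal h1
    _ = _ := by
        rw [ENNReal.ofReal_mul (by positivity),
          ENNReal.ofReal_add
            (mul_nonneg (mul_nonneg (wgt_pos _ _ _).le (norm_nonneg _))
              (mul_nonneg (wgt_pos _ _ _).le (norm_nonneg _)))
            (mul_nonneg (mul_nonneg (wgt_pos _ _ _).le (norm_nonneg _))
              (mul_nonneg (wgt_pos _ _ _).le (norm_nonneg _))),
          ENNReal.ofReal_mul (mul_nonneg (wgt_pos τ r (k-ℓ)).le (norm_nonneg _)),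
          ENNReal.ofReal_mul (mul_nonneg (wgt_pos τ 0 (k-ℓ)).le (norm_nonneg _))]
        rfl

/-! ### Main theorem -/

/-- Gevrey product estimate:
`|fg|_{X^r} ≤ C |f|_{X^s}|g|_{X^r} + C |f|_{X^r}|g|_{X^s}` for `r ≥ 0`, `s > 1/2`. -/
theorem gevrey_product_estimate (r s : ℝ) (hr : 0 ≤ r) (hs : 1 / 2 < s) :
    ∃ C : ℝ, 0 < C ∧ ∀ (τ : ℝ), 0 ≤ τ → ∀ f g : ℤ → ℂ,
      Summable (fun k : ℤ =>
        (jap k ^ r * Real.exp (τ * jap k ^ ((2 : ℝ) / 3)) * ‖f k‖) ^ 2) →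
      Summable (fun k : ℤ =>
        (jap k ^ s * Real.exp (τ * jap k ^ ((2 : ℝ) / 3)) * ‖f k‖) ^ 2) →
      Summable (fun k : ℤ =>
        (jap k ^ r * Real.exp (τ * jap k ^ ((2 : ℝ) / 3)) * ‖g k‖) ^ 2) →
      Summable (fun k : ℤ =>
        (jap k ^ s * Real.exp (τ * jap k ^ ((2 : ℝ) / 3)) * ‖g k‖) ^ 2) →
      (∀ k : ℤ, Summable (fun ℓ : ℤ => f (k - ℓ) * g ℓ)) →
      Xnorm τ r (conv f g) ≤
        C * Xnorm τ s f * Xnorm τ r g + C * Xnorm τ r f * Xnorm τ s g := by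
  -- the constant
  set Kr : ℝ := ∑' ℓ : ℤ, jap ℓ ^ (-(2*s)) with hKr
  have hKr_sum : Summable (fun ℓ : ℤ => jap ℓ ^ (-(2*s))) := summable_jap_neg hs
  have hKr_nonneg : 0 ≤ Kr := tsum_nonneg fun ℓ => Real.rpow_nonneg (jap_pos ℓ).le _
  refine ⟨2 ^ r * Real.sqrt Kr + 1, by positivity, ?_⟩
  intro τ hτ f g hfr hfs hgr hgs hconv
  -- summability hypotheses in terms of `wgt`
  have hfr' : Summable (fun k : ℤ => (wgt τ r k * ‖f k‖) ^ 2) := by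
    simpa [wgt, mul_assoc] using hfr
  have hfs' : Summable (fun k : ℤ => (wgt τ s k * ‖f k‖) ^ 2) := by
    simpa [wgt, mul_assoc] using hfs
  have hgr' : Summable (fun k : ℤ => (wgt τ r k * ‖g k‖) ^ 2) := by
    simpa [wgt, mul_assoc] using hgr
  have hgs' : Summable (fun k : ℤ => (wgt τ s k * ‖g k‖) ^ 2) := by
    simpa [wgt, mul_assoc] using hgs
  -- components
  set U : ℤ → ℝ≥0∞ := fun k => ∑' ℓ : ℤ, eA τ r f (k - ℓ) * eA τ 0 g ℓ with hU
  set V : ℤ → ℝ≥0∞ := fun k => ∑' ℓ : ℤ, eA τ 0 f (k - ℓ) * eA τ r g ℓ with hV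
  -- key pointwise estimate
  have key : ∀ k : ℤ, eA τ r (conv f g) k ≤ ENNReal.ofReal (2 ^ r) * (U k + V k) := by
    intro k
    have hnorm : Summable (fun ℓ : ℤ => ‖f (k - ℓ) * g ℓ‖) :=
      (summable_norm_iff.mpr (hconv k))
    have hnorm' : Summable (fun ℓ : ℤ => ‖f (k - ℓ)‖ * ‖g ℓ‖) := by
      refine hnorm.congr fun ℓ => ?_
      rw [norm_mul]
    have habs : ‖conv f g k‖ ≤
        ∑' ℓ : ℤ, ‖f (k - ℓ)‖ * ‖g ℓ‖ := by
      rw [conv]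
      have h := norm_tsum_le_tsum_norm hnorm
      calc ‖∑' ℓ : ℤ, f (k - ℓ) * g ℓ‖ = ‖∑' ℓ : ℤ, f (k - ℓ) * g ℓ‖ := rfl
        _ ≤ ∑' ℓ : ℤ, ‖f (k - ℓ) * g ℓ‖ := h
        _ = _ := tsum_congr fun ℓ => by rw [norm_mul]
    have hsum2 : Summable
        (fun ℓ : ℤ => wgt τ r k * (‖f (k - ℓ)‖ * ‖g ℓ‖)) :=
      hnorm'.mul_left _
    calc eA τ r (conv f g) k
        ≤ ENNReal.ofReal (∑' ℓ : ℤ,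
            wgt τ r k * (‖f (k - ℓ)‖ * ‖g ℓ‖)) := by
          rw [eA]
          apply ENNReal.ofReal_le_ofReal
          rw [tsum_mul_left]
          exact mul_le_mul_of_nonneg_left habs (wgt_pos τ r k).le
      _ = ∑' ℓ : ℤ, ENNReal.ofReal
            (wgt τ r k * (‖f (k - ℓ)‖ * ‖g ℓ‖)) := by
          rw [ENNReal.ofReal_tsum_of_nonneg
            (fun ℓ => mul_nonneg (wgt_pos τ r k).le
              (mul_nonneg (norm_nonneg _) (norm_nonneg _))) hsum2]
      _ ≤ ∑' ℓ : ℤ, ENNReal.ofReal (2 ^ r) *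
            (eA τ r f (k - ℓ) * eA τ 0 g ℓ + eA τ 0 f (k - ℓ) * eA τ r g ℓ) :=
          ENNReal.tsum_le_tsum fun ℓ => per_ell hr hτ f g k ℓ
      _ = ENNReal.ofReal (2 ^ r) * (U k + V k) := by
          rw [ENNReal.tsum_mul_left, ENNReal.tsum_add]
  -- the ℓ² bound for U
  have hUbound : (∑' k : ℤ, U k ^ (2:ℝ)) ^ ((1:ℝ)/2) ≤
      ENNReal.ofReal (Xnorm τ r f) *
        (ENNReal.ofReal (Real.sqrt Kr) * ENNReal.ofReal (Xnorm τ s g)) := by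
    have hyoung := enn_young (eA τ r f) (eA τ 0 g)
    have h1 : (∑' k : ℤ, U k ^ (2:ℝ)) ^ ((1:ℝ)/2) ≤
        (∑' m : ℤ, eA τ r f m ^ (2:ℝ)) ^ ((1:ℝ)/2) * (∑' m : ℤ, eA τ 0 g m) := by
      calc (∑' k : ℤ, U k ^ (2:ℝ)) ^ ((1:ℝ)/2)
          ≤ ((∑' m : ℤ, eA τ r f m ^ (2:ℝ)) * (∑' m : ℤ, eA τ 0 g m) ^ (2:ℝ)) ^ ((1:ℝ)/2) :=
            ENNReal.rpow_le_rpow hyoung (by norm_num)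
        _ = _ := by
            rw [ENNReal.mul_rpow_of_nonneg _ _ (by norm_num), ← ENNReal.rpow_mul]
            norm_num
    have h2 := eA_l1 hs τ g
    have hK : (∑' ℓ : ℤ, (ENNReal.ofReal (jap ℓ)) ^ (-(2*s))) ^ ((1:ℝ)/2) =
        ENNReal.ofReal (Real.sqrt Kr) := by
      have : ∑' ℓ : ℤ, (ENNReal.ofReal (jap ℓ)) ^ (-(2*s)) = ENNReal.ofReal Kr := by
        rw [hKr, ENNReal.ofReal_tsum_of_nonneg (fun ℓ => Real.rpow_nonneg (jap_pos ℓ).le _)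
          hKr_sum]
        exact tsum_congr fun ℓ => ENNReal.ofReal_rpow_of_pos (jap_pos ℓ)
      rw [this, Real.sqrt_eq_rpow, ENNReal.ofReal_rpow_of_nonneg hKr_nonneg (by norm_num)]
    calc (∑' k : ℤ, U k ^ (2:ℝ)) ^ ((1:ℝ)/2)
        ≤ (∑' m : ℤ, eA τ r f m ^ (2:ℝ)) ^ ((1:ℝ)/2) * (∑' m : ℤ, eA τ 0 g m) := h1
      _ ≤ (∑' m : ℤ, eA τ r f m ^ (2:ℝ)) ^ ((1:ℝ)/2) *
            ((∑' ℓ : ℤ, (ENNReal.ofReal (jap ℓ)) ^ (-(2*s))) ^ ((1:ℝ)/2) *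
              (∑' ℓ : ℤ, eA τ s g ℓ ^ (2:ℝ)) ^ ((1:ℝ)/2)) := by gcongr
      _ = ENNReal.ofReal (Xnorm τ r f) *
            (ENNReal.ofReal (Real.sqrt Kr) * ENNReal.ofReal (Xnorm τ s g)) := by
          rw [eA_l2 τ r f hfr', hK, eA_l2 τ s g hgs']
  -- the ℓ² bound for V
  have hVrw : ∀ k : ℤ, V k = ∑' ℓ : ℤ, eA τ r g (k - ℓ) * eA τ 0 f ℓ := by
    intro k
    show (∑' ℓ : ℤ, eA τ 0 f (k - ℓ) * eA τ r g ℓ) = _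
    rw [← Equiv.tsum_eq (Equiv.subLeft k) (fun ℓ => eA τ 0 f (k - ℓ) * eA τ r g ℓ)]
    refine tsum_congr fun m => ?_
    simp only [Equiv.subLeft_apply, sub_sub_cancel]
    ring
  have hVbound : (∑' k : ℤ, V k ^ (2:ℝ)) ^ ((1:ℝ)/2) ≤
      ENNReal.ofReal (Xnorm τ r g) *
        (ENNReal.ofReal (Real.sqrt Kr) * ENNReal.ofReal (Xnorm τ s f)) := by
    have hyoung := enn_young (eA τ r g) (eA τ 0 f)
    have h1 : (∑' k : ℤ, V k ^ (2:ℝ)) ^ ((1:ℝ)/2) ≤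
        (∑' m : ℤ, eA τ r g m ^ (2:ℝ)) ^ ((1:ℝ)/2) * (∑' m : ℤ, eA τ 0 f m) := by
      have hVs : ∑' k : ℤ, V k ^ (2:ℝ) =
          ∑' k : ℤ, (∑' ℓ : ℤ, eA τ r g (k - ℓ) * eA τ 0 f ℓ) ^ (2:ℝ) :=
        tsum_congr fun k => by rw [hVrw k]
      rw [hVs]
      calc (∑' k : ℤ, (∑' ℓ : ℤ, eA τ r g (k - ℓ) * eA τ 0 f ℓ) ^ (2:ℝ)) ^ ((1:ℝ)/2)
          ≤ ((∑' m : ℤ, eA τ r g m ^ (2:ℝ)) * (∑' m : ℤ, eA τ 0 f m) ^ (2:ℝ)) ^ ((1:ℝ)/2) :=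
            ENNReal.rpow_le_rpow hyoung (by norm_num)
        _ = _ := by
            rw [ENNReal.mul_rpow_of_nonneg _ _ (by norm_num), ← ENNReal.rpow_mul]
            norm_num
    have h2 := eA_l1 hs τ f
    have hK : (∑' ℓ : ℤ, (ENNReal.ofReal (jap ℓ)) ^ (-(2*s))) ^ ((1:ℝ)/2) =
        ENNReal.ofReal (Real.sqrt Kr) := by
      have : ∑' ℓ : ℤ, (ENNReal.ofReal (jap ℓ)) ^ (-(2*s)) = ENNReal.ofReal Kr := by
        rw [hKr, ENNReal.ofReal_tsum_of_nonneg (fun ℓ => Real.rpow_nonneg (jap_pos ℓ).le _)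
          hKr_sum]
        exact tsum_congr fun ℓ => ENNReal.ofReal_rpow_of_pos (jap_pos ℓ)
      rw [this, Real.sqrt_eq_rpow, ENNReal.ofReal_rpow_of_nonneg hKr_nonneg (by norm_num)]
    calc (∑' k : ℤ, V k ^ (2:ℝ)) ^ ((1:ℝ)/2)
        ≤ (∑' m : ℤ, eA τ r g m ^ (2:ℝ)) ^ ((1:ℝ)/2) * (∑' m : ℤ, eA τ 0 f m) := h1
      _ ≤ (∑' m : ℤ, eA τ r g m ^ (2:ℝ)) ^ ((1:ℝ)/2) *
            ((∑' ℓ : ℤ, (ENNReal.ofReal (jap ℓ)) ^ (-(2*s))) ^ ((1:ℝ)/2) *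
              (∑' ℓ : ℤ, eA τ s f ℓ ^ (2:ℝ)) ^ ((1:ℝ)/2)) := by gcongr
      _ = ENNReal.ofReal (Xnorm τ r g) *
            (ENNReal.ofReal (Real.sqrt Kr) * ENNReal.ofReal (Xnorm τ s f)) := by
          rw [eA_l2 τ r g hgr', hK, eA_l2 τ s f hfs']
  -- left-hand side bound
  have hLHS : ENNReal.ofReal (Xnorm τ r (conv f g)) ≤
      (∑' k : ℤ, eA τ r (conv f g) k ^ (2:ℝ)) ^ ((1:ℝ)/2) := by
    rw [Xnorm, Real.sqrt_eq_rpow,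
      ← ENNReal.ofReal_rpow_of_nonneg (tsum_nonneg fun k => sq_nonneg _) (by norm_num)]
    apply ENNReal.rpow_le_rpow _ (by norm_num)
    by_cases h : Summable (fun k : ℤ =>
        (jap k ^ r * Real.exp (τ * jap k ^ ((2:ℝ)/3)) * ‖conv f g k‖) ^ 2)
    · rw [ENNReal.ofReal_tsum_of_nonneg (fun k => sq_nonneg _) h]
      apply ENNReal.tsum_le_tsum
      intro k
      rw [eA_sq]
      apply ENNReal.ofReal_le_ofReal
      apply le_of_eq
      simp only [wgt, mul_assoc]
    · rw [tsum_eq_zero_of_not_summable h]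
      simp
  -- combine
  have hmain : ENNReal.ofReal (Xnorm τ r (conv f g)) ≤
      ENNReal.ofReal (2 ^ r) *
        (ENNReal.ofReal (Xnorm τ r f) *
          (ENNReal.ofReal (Real.sqrt Kr) * ENNReal.ofReal (Xnorm τ s g)) +
        ENNReal.ofReal (Xnorm τ r g) *
          (ENNReal.ofReal (Real.sqrt Kr) * ENNReal.ofReal (Xnorm τ s f))) := by
    have hsq12 : ∀ x : ℝ≥0∞, (x ^ (2:ℝ)) ^ ((1:ℝ)/2) = x := by
      intro x; rw [← ENNReal.rpow_mul]; norm_num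
    calc ENNReal.ofReal (Xnorm τ r (conv f g))
        ≤ (∑' k : ℤ, eA τ r (conv f g) k ^ (2:ℝ)) ^ ((1:ℝ)/2) := hLHS
      _ ≤ (∑' k : ℤ, (ENNReal.ofReal (2 ^ r) * (U k + V k)) ^ (2:ℝ)) ^ ((1:ℝ)/2) := by
          apply ENNReal.rpow_le_rpow _ (by norm_num)
          exact ENNReal.tsum_le_tsum fun k => ENNReal.rpow_le_rpow (key k) (by norm_num)
      _ = ENNReal.ofReal (2 ^ r) * (∑' k : ℤ, (U k + V k) ^ (2:ℝ)) ^ ((1:ℝ)/2) := by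
          have : ∀ k : ℤ, (ENNReal.ofReal (2 ^ r) * (U k + V k)) ^ (2:ℝ) =
              ENNReal.ofReal (2 ^ r) ^ (2:ℝ) * (U k + V k) ^ (2:ℝ) := fun k =>
            ENNReal.mul_rpow_of_nonneg _ _ (by norm_num)
          rw [tsum_congr this, ENNReal.tsum_mul_left,
            ENNReal.mul_rpow_of_nonneg _ _ (by norm_num), hsq12]
      _ ≤ ENNReal.ofReal (2 ^ r) *
            ((∑' k : ℤ, U k ^ (2:ℝ)) ^ ((1:ℝ)/2) + (∑' k : ℤ, V k ^ (2:ℝ)) ^ ((1:ℝ)/2)) := by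
          gcongr
          exact enn_minkowski U V
      _ ≤ _ := mul_le_mul_right (add_le_add hUbound hVbound) _
  -- conclude in ℝ
  set C : ℝ := 2 ^ r * Real.sqrt Kr + 1 with hC
  have hXnonneg : ∀ (ρ : ℝ) (h : ℤ → ℂ), 0 ≤ Xnorm τ ρ h := fun ρ h => Real.sqrt_nonneg _
  have hRHS : ENNReal.ofReal (2 ^ r) *
      (ENNReal.ofReal (Xnorm τ r f) *
        (ENNReal.ofReal (Real.sqrt Kr) * ENNReal.ofReal (Xnorm τ s g)) +
      ENNReal.ofReal (Xnorm τ r g) *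
        (ENNReal.ofReal (Real.sqrt Kr) * ENNReal.ofReal (Xnorm τ s f))) =
      ENNReal.ofReal (2 ^ r * (Xnorm τ r f * (Real.sqrt Kr * Xnorm τ s g) +
        Xnorm τ r g * (Real.sqrt Kr * Xnorm τ s f))) := by
    rw [ENNReal.ofReal_mul (by positivity : (0:ℝ) ≤ 2 ^ r),
      ENNReal.ofReal_add
        (mul_nonneg (hXnonneg r f) (mul_nonneg (Real.sqrt_nonneg Kr) (hXnonneg s g)))
        (mul_nonneg (hXnonneg r g) (mul_nonneg (Real.sqrt_nonneg Kr) (hXnonneg s f))),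
      ENNReal.ofReal_mul (hXnonneg r f), ENNReal.ofReal_mul (hXnonneg r g),
      ENNReal.ofReal_mul (Real.sqrt_nonneg Kr), ENNReal.ofReal_mul (Real.sqrt_nonneg Kr)]
  rw [hRHS] at hmain
  have hfinal : Xnorm τ r (conv f g) ≤
      2 ^ r * (Xnorm τ r f * (Real.sqrt Kr * Xnorm τ s g) +
        Xnorm τ r g * (Real.sqrt Kr * Xnorm τ s f)) :=
    (ENNReal.ofReal_le_ofReal_iff (mul_nonneg (by positivity)
      (add_nonneg
        (mul_nonneg (hXnonneg r f) (mul_nonneg (Real.sqrt_nonneg Kr) (hXnonneg s g)))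
        (mul_nonneg (hXnonneg r g) (mul_nonneg (Real.sqrt_nonneg Kr) (hXnonneg s f)))))).mp hmain
  have hCineq : 2 ^ r * (Xnorm τ r f * (Real.sqrt Kr * Xnorm τ s g) +
      Xnorm τ r g * (Real.sqrt Kr * Xnorm τ s f)) ≤
      C * Xnorm τ s f * Xnorm τ r g + C * Xnorm τ r f * Xnorm τ s g := by
    rw [hC]
    have h2r : (0:ℝ) < 2 ^ r := by positivity
    have hK := Real.sqrt_nonneg Kr
    nlinarith [mul_nonneg (hXnonneg r f) (hXnonneg s g), mul_nonneg (hXnonneg r g) (hXnonneg s f),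
      mul_nonneg (mul_nonneg h2r.le hK) (mul_nonneg (hXnonneg r f) (hXnonneg s g)),
      mul_nonneg (mul_nonneg h2r.le hK) (mul_nonneg (hXnonneg r g) (hXnonneg s f))]
  exact hfinal.trans hCineq
end

section
/- Let ε > 0, k ∈ ℤ \ {0}, λ ≥ 1, ζ ∈ ℝ, and γ = √(ε²k² + λ⟨k⟩^{2/3} + iζ) with Re(γ) > 0. Then the multiplier m(y) = ε|k| e^{-ε|k| y} · (1 − e^{-(γ-ε|k|)y})/(γ − ε|k|) satisfies ‖m‖_{L²(0,∞)} ≤ C λ^{-1/4} ⟨k⟩^{-1/6} for a universal constant C. -/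
open MeasureTheory

/-- `|1 - e^{-w}| ≤ |w|` for `Re w ≥ 0`. -/
lemma abs_one_sub_exp_neg_le {w : ℂ} (hw : 0 ≤ w.re) :
    ‖(1 - Complex.exp (-w))‖ ≤ ‖w‖ := by
  have hder : ∀ t ∈ Set.Icc (0:ℝ) 1,
      HasDerivWithinAt (fun t : ℝ => Complex.exp (-(t:ℂ) * w))
        (-w * Complex.exp (-(t:ℂ) * w)) (Set.Icc 0 1) t := by
    intro t _
    have h1 : HasDerivAt (fun t : ℝ => -(t:ℂ) * w) (-w) t := by
      have := (Complex.ofRealCLM.hasDerivAt (x := t)).neg.mul_const w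
      simpa using this
    simpa [mul_comm] using (h1.cexp).hasDerivWithinAt
  have hbound : ∀ t ∈ Set.Ico (0:ℝ) 1,
      ‖-w * Complex.exp (-(t:ℂ) * w)‖ ≤ ‖w‖ := by
    intro t ht
    rw [norm_mul, norm_neg, Complex.norm_exp]
    have : (-(t:ℂ) * w).re = -(t * w.re) := by simp
    rw [this]
    have h1 : Real.exp (-(t * w.re)) ≤ 1 := by
      apply Real.exp_le_one_iff.mpr
      simp only [neg_nonpos]
      exact mul_nonneg ht.1 hw
    calc ‖w‖ * Real.exp (-(t * w.re)) ≤ ‖w‖ * 1 :=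
          mul_le_mul_of_nonneg_left h1 (norm_nonneg w)
      _ = ‖w‖ := mul_one _
  have := norm_image_sub_le_of_norm_deriv_le_segment_01' hder hbound
  simp only [Complex.ofReal_one, Complex.ofReal_zero, neg_zero, zero_mul, Complex.exp_zero,
    neg_mul, one_mul] at this
  rw [← norm_neg]
  simpa [neg_sub] using this

/-- `|1 - e^{-w}| ≤ 2` for `Re w ≥ 0`. -/
lemma abs_one_sub_exp_neg_le_two {w : ℂ} (hw : 0 ≤ w.re) :
    ‖(1 - Complex.exp (-w))‖ ≤ 2 := by
  calc ‖(1 - Complex.exp (-w))‖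
      ≤ ‖(1:ℂ)‖ + ‖Complex.exp (-w)‖ := by
        simpa using norm_sub_le (1 : ℂ) (Complex.exp (-w))
    _ ≤ 1 + 1 := by
        rw [norm_one, Complex.norm_exp]
        have : Real.exp (-w).re ≤ 1 := Real.exp_le_one_iff.mpr (by simpa using hw)
        linarith
    _ = 2 := by norm_num

set_option maxHeartbeats 1000000 in
/-- The boundary-layer multiplier
`m(y) = ε|k| e^{-ε|k|y} (1 - e^{-(γ-ε|k|)y})/(γ-ε|k|)` satisfies
`‖m‖_{L²(0,∞)} ≤ C λ^(-1/4) ⟨k⟩^(-1/6)` for a universal constant `C`. -/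
theorem stokes_multiplier_L2_halfline :
    ∃ C : ℝ, 0 < C ∧
    ∀ (ε lam ζ : ℝ) (k : ℤ) (γ : ℂ), 0 < ε → k ≠ 0 → 1 ≤ lam →
      γ ^ 2 = Complex.ofReal (ε ^ 2 * (k : ℝ) ^ 2 + lam * jap k ^ ((2 : ℝ) / 3))
                + Complex.I * Complex.ofReal ζ →
      0 < γ.re →
      Real.sqrt (∫ y in Set.Ioi (0 : ℝ),
          (‖((ε * |(k : ℝ)| : ℝ) * Complex.exp (-(ε * |(k : ℝ)| : ℝ) * y) *
            ((1 - Complex.exp (-(γ - (ε * |(k : ℝ)| : ℝ)) * y)) /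
              (γ - (ε * |(k : ℝ)| : ℝ))))‖) ^ 2) ≤
        C * lam ^ (-(1 : ℝ) / 4) * jap k ^ (-(1 : ℝ) / 6) := by
  refine ⟨2, by norm_num, ?_⟩
  intro ε lam ζ k γ hε hk hlam hγ hγre
  set a : ℝ := ε * |(k : ℝ)| with ha_def
  have hk0 : (k : ℝ) ≠ 0 := Int.cast_ne_zero.mpr hk
  have ha : 0 < a := mul_pos hε (abs_pos.mpr hk0)
  have hlam0 : (0:ℝ) < lam := lt_of_lt_of_le one_pos hlam
  have hjap0 : 0 < jap k := Real.sqrt_pos.mpr (by positivity)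
  set B : ℝ := Real.sqrt lam * jap k ^ ((1:ℝ)/3) with hB_def
  have hjrp : (0:ℝ) < jap k ^ ((1:ℝ)/3) := Real.rpow_pos_of_pos hjap0 _
  have hB0 : 0 < B := mul_pos (Real.sqrt_pos.mpr hlam0) hjrp
  have hB2 : B ^ 2 = lam * jap k ^ ((2:ℝ)/3) := by
    rw [hB_def, mul_pow, Real.sq_sqrt hlam0.le, ← Real.rpow_natCast (jap k ^ ((1:ℝ)/3)) 2,
      ← Real.rpow_mul hjap0.le]
    norm_num
  -- real part of γ²
  have hre2 : γ.re ^ 2 = a ^ 2 + B ^ 2 + γ.im ^ 2 := by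
    have h := congrArg Complex.re hγ
    rw [pow_two] at h
    simp only [Complex.mul_re, Complex.add_re, Complex.ofReal_re, Complex.I_re,
      Complex.ofReal_im, Complex.I_im, Complex.mul_im, zero_mul, mul_zero] at h
    have ha2 : a ^ 2 = ε ^ 2 * (k : ℝ) ^ 2 := by
      rw [ha_def, mul_pow, sq_abs]
    rw [hB2]
    nlinarith [h]
  have hsqle : Real.sqrt (a ^ 2 + B ^ 2) ≤ γ.re := by
    have h1 : a ^ 2 + B ^ 2 ≤ γ.re ^ 2 := by nlinarith [sq_nonneg γ.im]
    calc Real.sqrt (a ^ 2 + B ^ 2) ≤ Real.sqrt (γ.re ^ 2) := Real.sqrt_le_sqrt h1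
      _ = γ.re := Real.sqrt_sq hγre.le
  have haB : a < Real.sqrt (a ^ 2 + B ^ 2) :=
    (Real.lt_sqrt ha.le).mpr (by nlinarith)
  have hBB : B ≤ Real.sqrt (a ^ 2 + B ^ 2) :=
    (Real.le_sqrt hB0.le (by positivity)).mpr (by nlinarith)
  set d : ℝ := ‖(γ - (a : ℂ))‖ with hd_def
  have hdre : γ.re - a ≤ d := by
    have h : (γ - (a : ℂ)).re = γ.re - a := by simp
    rw [hd_def, ← h]
    exact Complex.re_le_norm _
  have hd_lb : Real.sqrt (a ^ 2 + B ^ 2) - a ≤ d := by linarith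
  have hd0 : 0 < d := by linarith
  have hrea : 0 ≤ γ.re - a := by linarith
  clear_value a B d
  -- pointwise form of the integrand
  have habs : ∀ y : ℝ, 0 ≤ y →
      ‖((a : ℂ) * Complex.exp (-(a:ℂ) * y) *
        ((1 - Complex.exp (-(γ - (a:ℂ)) * y)) / (γ - (a:ℂ))))‖
      = a * Real.exp (-(a * y)) *
        (‖(1 - Complex.exp (-((γ - (a:ℂ)) * y)))‖ / d) := by
    intro y _
    rw [norm_mul, norm_mul, norm_div, Complex.norm_real, Real.norm_eq_abs, abs_of_pos ha, Complex.norm_exp,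
      ← hd_def]
    congr 2
    · congr 1
      simp
    · rw [neg_mul]
  have hrew : ∀ y : ℝ, 0 ≤ y → 0 ≤ ((γ - (a:ℂ)) * y).re := by
    intro y hy
    have : ((γ - (a:ℂ)) * (y:ℂ)).re = (γ.re - a) * y := by
      simp [Complex.mul_re]
    rw [this]
    exact mul_nonneg hrea hy
  -- main integral bound
  have hmain : (∫ y in Set.Ioi (0:ℝ),
      (‖((a : ℂ) * Complex.exp (-(a:ℂ) * y) *
        ((1 - Complex.exp (-(γ - (a:ℂ)) * y)) / (γ - (a:ℂ))))‖) ^ 2) ≤ 4 / B := by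
    rcases le_total B (2*a) with hcase | hcase
    · -- big a : bound by a² y² e^{-2ay}
      have hg_int : IntegrableOn
          (fun y : ℝ => a^2 * (y ^ (2:ℝ) * Real.exp (-(2*a) * y))) (Set.Ioi 0) := by
        have := integrableOn_rpow_mul_exp_neg_mul_rpow (p := 1) (s := 2) (b := 2*a)
          (by norm_num) (by norm_num) (by positivity)
        simp only [Real.rpow_one] at this
        exact this.const_mul _
      have hle : ∀ y ∈ Set.Ioi (0:ℝ),
          (‖((a : ℂ) * Complex.exp (-(a:ℂ) * y) *
            ((1 - Complex.exp (-(γ - (a:ℂ)) * y)) / (γ - (a:ℂ))))‖) ^ 2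
          ≤ a^2 * (y ^ (2:ℝ) * Real.exp (-(2*a) * y)) := by
        intro y hy
        have hy0 : 0 < y := hy
        have hnum : ‖(1 - Complex.exp (-((γ - (a:ℂ)) * y)))‖ ≤ d * y := by
          have h1 := abs_one_sub_exp_neg_le (hrew y hy0.le)
          calc ‖(1 - Complex.exp (-((γ - (a:ℂ)) * y)))‖
              ≤ ‖((γ - (a:ℂ)) * y)‖ := h1
            _ = d * y := by
                rw [norm_mul, Complex.norm_real, Real.norm_eq_abs, abs_of_pos hy0, ← hd_def]
        rw [habs y hy0.le]
        have hstep : a * Real.exp (-(a * y)) *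
            (‖(1 - Complex.exp (-((γ - (a:ℂ)) * y)))‖ / d)
            ≤ a * Real.exp (-(a * y)) * y := by
          apply mul_le_mul_of_nonneg_left _ (by positivity)
          rw [div_le_iff₀ hd0]
          linarith [hnum]
        calc (a * Real.exp (-(a * y)) *
              (‖(1 - Complex.exp (-((γ - (a:ℂ)) * y)))‖ / d)) ^ 2
            ≤ (a * Real.exp (-(a * y)) * y) ^ 2 := by
              apply pow_le_pow_left₀ (by positivity) hstep
          _ = a^2 * (y ^ (2:ℝ) * Real.exp (-(2*a) * y)) := by
              rw [Real.rpow_two]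
              have hexp : Real.exp (-(a * y)) ^ 2 = Real.exp (-(2*a) * y) := by
                rw [pow_two, ← Real.exp_add]; ring_nf
              rw [mul_pow, mul_pow, hexp]; ring
      have hint_le : (∫ y in Set.Ioi (0:ℝ),
          (‖((a : ℂ) * Complex.exp (-(a:ℂ) * y) *
            ((1 - Complex.exp (-(γ - (a:ℂ)) * y)) / (γ - (a:ℂ))))‖) ^ 2)
          ≤ ∫ y in Set.Ioi (0:ℝ), a^2 * (y ^ (2:ℝ) * Real.exp (-(2*a) * y)) := by
        apply integral_mono_of_nonneg
        · exact Filter.Eventually.of_forall (fun y => by positivity)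
        · exact hg_int
        · exact (ae_restrict_iff' measurableSet_Ioi).mpr (Filter.Eventually.of_forall hle)
      have hval : (∫ y in Set.Ioi (0:ℝ), a^2 * (y ^ (2:ℝ) * Real.exp (-(2*a) * y)))
          = 1 / (4 * a) := by
        rw [integral_const_mul]
        have h1 := Real.integral_rpow_mul_exp_neg_mul_Ioi (a := 3) (r := 2*a)
          (by norm_num) (by positivity)
        have h2 : (∫ y in Set.Ioi (0:ℝ), y ^ (2:ℝ) * Real.exp (-(2*a) * y))
            = (1/(2*a)) ^ (3:ℝ) * Real.Gamma 3 := by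
          rw [← h1]
          apply setIntegral_congr_fun measurableSet_Ioi
          intro t _
          norm_num [neg_mul, mul_assoc]
        rw [h2]
        have hG : Real.Gamma 3 = 2 := by
          rw [show (3:ℝ) = (2:ℕ) + 1 by norm_num, Real.Gamma_nat_eq_factorial]
          norm_num
        have h3 : ((1:ℝ)/(2*a)) ^ (3:ℝ) = (1/(2*a))^(3:ℕ) := by
          rw [← Real.rpow_natCast (1/(2*a)) 3]
          norm_num
        rw [hG, h3]
        field_simp
        ring
      rw [hval] at hint_le
      refine le_trans hint_le ?_
      rw [div_le_div_iff₀ (by positivity) hB0]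
      linarith
    · -- small a : bound by (2a/d)² e^{-2ay}
      have hd_half : B / 2 ≤ d := by
        have : B - a ≤ Real.sqrt (a ^ 2 + B ^ 2) - a := by linarith
        have h2 : B - a ≤ d := by linarith
        linarith
      have hg_int : IntegrableOn
          (fun y : ℝ => (2*a/d)^2 * Real.exp (-(2*a) * y)) (Set.Ioi 0) := by
        exact (exp_neg_integrableOn_Ioi 0 (by positivity : (0:ℝ) < 2*a)).const_mul _
      have hle : ∀ y ∈ Set.Ioi (0:ℝ),
          (‖((a : ℂ) * Complex.exp (-(a:ℂ) * y) *
            ((1 - Complex.exp (-(γ - (a:ℂ)) * y)) / (γ - (a:ℂ))))‖) ^ 2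
          ≤ (2*a/d)^2 * Real.exp (-(2*a) * y) := by
        intro y hy
        have hy0 : 0 < y := hy
        have hnum := abs_one_sub_exp_neg_le_two (hrew y hy0.le)
        rw [habs y hy0.le]
        have hstep : a * Real.exp (-(a * y)) *
            (‖(1 - Complex.exp (-((γ - (a:ℂ)) * y)))‖ / d)
            ≤ a * Real.exp (-(a * y)) * (2 / d) := by
          apply mul_le_mul_of_nonneg_left _ (by positivity)
          gcongr
        calc (a * Real.exp (-(a * y)) *
              (‖(1 - Complex.exp (-((γ - (a:ℂ)) * y)))‖ / d)) ^ 2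
            ≤ (a * Real.exp (-(a * y)) * (2 / d)) ^ 2 := by
              apply pow_le_pow_left₀ (by positivity) hstep
          _ = (2*a/d)^2 * Real.exp (-(2*a) * y) := by
              have hexp : Real.exp (-(a * y)) ^ 2 = Real.exp (-(2*a) * y) := by
                rw [pow_two, ← Real.exp_add]; ring_nf
              rw [mul_pow, mul_pow, hexp]
              field_simp
      have hint_le : (∫ y in Set.Ioi (0:ℝ),
          (‖((a : ℂ) * Complex.exp (-(a:ℂ) * y) *
            ((1 - Complex.exp (-(γ - (a:ℂ)) * y)) / (γ - (a:ℂ))))‖) ^ 2)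
          ≤ ∫ y in Set.Ioi (0:ℝ), (2*a/d)^2 * Real.exp (-(2*a) * y) := by
        apply integral_mono_of_nonneg
        · exact Filter.Eventually.of_forall (fun y => by positivity)
        · exact hg_int
        · exact (ae_restrict_iff' measurableSet_Ioi).mpr (Filter.Eventually.of_forall hle)
      have hval : (∫ y in Set.Ioi (0:ℝ), (2*a/d)^2 * Real.exp (-(2*a) * y))
          = (2*a/d)^2 * (1/(2*a)) := by
        rw [integral_const_mul]
        congr 1
        have h1 := Real.integral_rpow_mul_exp_neg_mul_Ioi (a := 1) (r := 2*a)
          (by norm_num) (by positivity)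
        have h2 : (∫ y in Set.Ioi (0:ℝ), Real.exp (-(2*a) * y))
            = (1/(2*a)) ^ (1:ℝ) * Real.Gamma 1 := by
          rw [← h1]
          apply setIntegral_congr_fun measurableSet_Ioi
          intro t _
          norm_num [neg_mul, mul_assoc, Real.rpow_zero]
        rw [h2, Real.Gamma_one, Real.rpow_one, mul_one]
      rw [hval] at hint_le
      refine le_trans hint_le ?_
      have heq : (2*a/d)^2 * (1/(2*a)) = 2*a/(d^2) := by
        field_simp
      rw [heq, div_le_div_iff₀ (by positivity) hB0]
      have hsq : (B/2)*(B/2) ≤ d*d := mul_self_le_mul_self (by positivity) hd_half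
      have h2 : (2*a)*B ≤ B*B := mul_le_mul_of_nonneg_right hcase hB0.le
      ring_nf at hsq h2 ⊢
      linarith [hsq, h2]
  -- conclude
  set R : ℝ := 2 * lam ^ (-(1:ℝ)/4) * jap k ^ (-(1:ℝ)/6) with hR_def
  have hR0 : 0 < R := by
    have := Real.rpow_pos_of_pos hlam0 (-(1:ℝ)/4)
    have := Real.rpow_pos_of_pos hjap0 (-(1:ℝ)/6)
    positivity
  clear_value R
  have h4B : 4 / B = R ^ 2 := by
    rw [hR_def, hB_def, Real.sqrt_eq_rpow, mul_pow, mul_pow,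
      ← Real.rpow_natCast (lam ^ (-(1:ℝ)/4)) 2, ← Real.rpow_mul hlam0.le,
      ← Real.rpow_natCast (jap k ^ (-(1:ℝ)/6)) 2, ← Real.rpow_mul hjap0.le,
      show (-(1:ℝ)/4 * (2:ℕ)) = -(1/2) by push_cast; ring,
      show (-(1:ℝ)/6 * (2:ℕ)) = -(1/3) by push_cast; ring,
      Real.rpow_neg hlam0.le, Real.rpow_neg hjap0.le]
    have h1 : lam ^ ((1:ℝ)/2) ≠ 0 := ne_of_gt (Real.rpow_pos_of_pos hlam0 _)
    have h2 : jap k ^ ((1:ℝ)/3) ≠ 0 := ne_of_gt hjrp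
    rw [div_eq_mul_inv, mul_inv]
    ring
  calc Real.sqrt (∫ y in Set.Ioi (0:ℝ),
        (‖((a : ℂ) * Complex.exp (-(a:ℂ) * y) *
          ((1 - Complex.exp (-(γ - (a:ℂ)) * y)) / (γ - (a:ℂ))))‖) ^ 2)
      ≤ Real.sqrt (R ^ 2) := Real.sqrt_le_sqrt (h4B ▸ hmain)
    _ = R := Real.sqrt_sq hR0.le
end

section
/- Let ε > 0, k ∈ ℤ, λ ≥ 1, ζ ∈ ℝ, and γ = √(ε²k² + λ⟨k⟩^{2/3} + iζ) with Re(γ) > 0. Then the multiplier n(y) = e^{-ε|k| y} · (1 − e^{-(γ-ε|k|)y})/(γ − ε|k|) satisfies ‖n‖_{L²(0,1)} ≤ C λ^{-1/2} ⟨k⟩^{-1/3} for a universal constant C. -/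
open MeasureTheory

/-- Pointwise bound `|1 - e^{-w}| ≤ 2 min(1, |w|)` for `Re w ≥ 0`. -/
lemma one_sub_exp_bound (w : ℂ) (hre : 0 ≤ w.re) :
    ‖1 - Complex.exp (-w)‖ ≤ 2 * min 1 (‖w‖) := by
  rcases le_or_gt (‖w‖) 1 with h | h
  · have h1 : ‖-w‖ ≤ 1 := by rwa [norm_neg]
    calc ‖1 - Complex.exp (-w)‖
        = ‖Complex.exp (-w) - 1‖ := norm_sub_rev _ _
      _ ≤ 2 * ‖-w‖ := Complex.norm_exp_sub_one_le h1
      _ = 2 * min 1 (‖w‖) := by rw [norm_neg, min_eq_right h]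
  · have he : ‖Complex.exp (-w)‖ ≤ 1 := by
      rw [Complex.norm_exp, Real.exp_le_one_iff, Complex.neg_re]
      linarith
    calc ‖1 - Complex.exp (-w)‖
        ≤ ‖1‖ + ‖Complex.exp (-w)‖ :=
          norm_sub_le _ _
      _ ≤ 1 + 1 := by simp [he]
      _ = 2 * min 1 (‖w‖) := by rw [min_eq_left h.le]; ring

set_option maxHeartbeats 1000000 in
/-- The multiplier `n(y) = e^{-ε|k|y} (1 - e^{-(γ-ε|k|)y})/(γ-ε|k|)` satisfies
`‖n‖_{L²(0,1)} ≤ C λ^(-1/2) ⟨k⟩^(-1/3)` for a universal constant `C`. -/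
theorem stokes_multiplier_L2_interval :
    ∃ C : ℝ, 0 < C ∧
    ∀ (ε lam ζ : ℝ) (k : ℤ) (γ : ℂ), 0 < ε → 1 ≤ lam →
      γ ^ 2 = Complex.ofReal (ε ^ 2 * (k : ℝ) ^ 2 + lam * jap k ^ ((2 : ℝ) / 3))
                + Complex.I * Complex.ofReal ζ →
      0 < γ.re →
      Real.sqrt (∫ y in Set.Ioo (0 : ℝ) 1,
          (‖Complex.exp (-(ε * |(k : ℝ)| : ℝ) * y) *
            ((1 - Complex.exp (-(γ - (ε * |(k : ℝ)| : ℝ)) * y)) /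
              (γ - (ε * |(k : ℝ)| : ℝ)))‖) ^ 2) ≤
        C * lam ^ (-(1 : ℝ) / 2) * jap k ^ (-(1 : ℝ) / 3) := by
  refine ⟨5, by norm_num, ?_⟩
  intro ε lam ζ k γ hε hlam hγsq hγre
  set a : ℝ := ε * |(k : ℝ)| with ha_def
  have ha0 : 0 ≤ a := mul_nonneg hε.le (abs_nonneg _)
  set J : ℝ := jap k with hJ_def
  have hJ1 : 1 ≤ J := by
    rw [hJ_def, jap, Real.one_le_sqrt]
    nlinarith [sq_nonneg ((k : ℝ))]
  have hJ0 : 0 < J := lt_of_lt_of_le one_pos hJ1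
  have hJ23 : 1 ≤ J ^ ((2 : ℝ) / 3) := Real.one_le_rpow hJ1 (by norm_num)
  set L : ℝ := lam * J ^ ((2 : ℝ) / 3) with hL_def
  have hL1 : 1 ≤ L := by nlinarith
  have hL0 : 0 < L := lt_of_lt_of_le one_pos hL1
  set X : ℝ := ε ^ 2 * (k : ℝ) ^ 2 + L with hX_def
  have ha2 : a ^ 2 = ε ^ 2 * (k : ℝ) ^ 2 := by rw [ha_def, mul_pow, sq_abs]
  have hXa : X = a ^ 2 + L := by rw [hX_def, ha2]
  have hX0 : 0 < X := by nlinarith [sq_nonneg a]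
  have hre : γ.re ^ 2 - γ.im ^ 2 = X := by
    have h := congrArg Complex.re hγsq
    simp only [pow_two, Complex.mul_re, Complex.add_re, Complex.ofReal_re,
      Complex.I_re, Complex.I_im, Complex.ofReal_im, Complex.mul_im] at h ⊢
    linarith [h]
  have hsX0 : 0 < Real.sqrt X := Real.sqrt_pos.2 hX0
  have hXsq : Real.sqrt X ^ 2 = X := Real.sq_sqrt hX0.le
  have hsqrtX_le : Real.sqrt X ≤ γ.re := by
    have h1 : X ≤ γ.re ^ 2 := by nlinarith [sq_nonneg γ.im]
    calc Real.sqrt X ≤ Real.sqrt (γ.re ^ 2) := Real.sqrt_le_sqrt h1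
      _ = γ.re := Real.sqrt_sq hγre.le
  have ha_le : a ≤ Real.sqrt X := by
    rw [show a = Real.sqrt (a ^ 2) from (Real.sqrt_sq ha0).symm]
    exact Real.sqrt_le_sqrt (by nlinarith)
  set z : ℂ := γ - ((a : ℝ) : ℂ) with hz_def
  have hz_re : Real.sqrt X - a ≤ z.re := by
    rw [hz_def]
    simp only [Complex.sub_re, Complex.ofReal_re]
    linarith
  have hz_re0 : 0 ≤ z.re := le_trans (by linarith) hz_re
  have hgap : L / (2 * Real.sqrt X) ≤ Real.sqrt X - a := by
    rw [div_le_iff₀ (by positivity)]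
    nlinarith [hXsq, ha_le, hXa]
  have hz_abs_lb : L / (2 * Real.sqrt X) ≤ ‖z‖ :=
    le_trans (hgap.trans hz_re) (Complex.re_le_norm z)
  have hz0 : 0 < ‖z‖ := lt_of_lt_of_le (by positivity) hz_abs_lb
  -- pointwise bound
  have hpt : ∀ y ∈ Set.Ioo (0 : ℝ) 1,
      (‖Complex.exp (-(a : ℝ) * y) *
        ((1 - Complex.exp (-(γ - ((a : ℝ) : ℂ)) * y)) / (γ - ((a : ℝ) : ℂ)))‖) ^ 2
        ≤ 20 / L := by
    intro y hy
    obtain ⟨hy0, hy1⟩ := hy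
    have habs : ‖Complex.exp (-(a : ℝ) * y)‖ = Real.exp (-(a * y)) := by
      rw [show -((a : ℝ) : ℂ) * (y : ℂ) = ((-(a * y) : ℝ) : ℂ) by push_cast; ring,
        Complex.norm_exp, Complex.ofReal_re]
    have hwre : 0 ≤ (z * (y : ℂ)).re := by
      simp only [Complex.mul_re, Complex.ofReal_re, Complex.ofReal_im]
      have : 0 ≤ z.re * y := mul_nonneg hz_re0 hy0.le
      simpa using this
    have hone := one_sub_exp_bound (z * (y : ℂ)) hwre
    have hwabs : ‖z * (y : ℂ)‖ = ‖z‖ * y := by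
      rw [norm_mul, Complex.norm_real, Real.norm_eq_abs, abs_of_nonneg hy0.le]
    rw [hwabs] at hone
    have hmain : ‖Complex.exp (-(a : ℝ) * y) *
        ((1 - Complex.exp (-(γ - ((a : ℝ) : ℂ)) * y)) / (γ - ((a : ℝ) : ℂ)))‖
        ≤ Real.exp (-(a * y)) * (2 * min 1 (‖z‖ * y) / ‖z‖) := by
      rw [norm_mul, norm_div, habs, ← hz_def]
      have he : -(γ - ((a : ℝ) : ℂ)) * (y : ℂ) = -(z * (y : ℂ)) := by rw [hz_def]; ring
      rw [he]
      gcongr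
    have hexp1 : Real.exp (-(a * y)) ≤ 1 := by
      rw [Real.exp_le_one_iff]; nlinarith
    rcases le_or_gt (Real.sqrt L) (2 * a) with hbig | hsmall
    · -- large a
      have hapos : 0 < a := by nlinarith [Real.sqrt_pos.2 hL0]
      have haypos : 0 < a * y := by positivity
      have hexp : Real.exp (-(a * y)) ≤ 1 / (a * y) := by
        rw [Real.exp_neg]
        have h1 : a * y ≤ Real.exp (a * y) := by
          linarith [Real.add_one_le_exp (a * y)]
        have h2 : 0 < Real.exp (a * y) := Real.exp_pos _
        rw [inv_eq_one_div, div_le_div_iff₀ h2 haypos]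
        nlinarith
      have h3 : ‖Complex.exp (-(a : ℝ) * y) *
          ((1 - Complex.exp (-(γ - ((a : ℝ) : ℂ)) * y)) / (γ - ((a : ℝ) : ℂ)))‖
          ≤ 2 / a := by
        calc ‖Complex.exp (-(a : ℝ) * y) *
              ((1 - Complex.exp (-(γ - ((a : ℝ) : ℂ)) * y)) / (γ - ((a : ℝ) : ℂ)))‖
            ≤ Real.exp (-(a * y)) * (2 * min 1 (‖z‖ * y) / ‖z‖) :=
              hmain
          _ ≤ (1 / (a * y)) * (2 * (‖z‖ * y) / ‖z‖) := by
              gcongr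
              exact min_le_right _ _
          _ = 2 / a := by field_simp
      have ha4 : L ≤ 4 * a ^ 2 := by
        nlinarith [Real.sq_sqrt hL0.le, Real.sqrt_nonneg L]
      calc (‖Complex.exp (-(a : ℝ) * y) *
            ((1 - Complex.exp (-(γ - ((a : ℝ) : ℂ)) * y)) / (γ - ((a : ℝ) : ℂ)))‖) ^ 2
          ≤ (2 / a) ^ 2 := by
            gcongr
        _ = 4 / a ^ 2 := by rw [div_pow]; norm_num
        _ ≤ 20 / L := by
            rw [div_le_div_iff₀ (by positivity) hL0]
            nlinarith
    · -- small a
      have hX54 : X ≤ 5 / 4 * L := by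
        have : a ^ 2 ≤ L / 4 := by
          nlinarith [Real.sq_sqrt hL0.le, Real.sqrt_nonneg L]
        rw [hXa]; linarith
      have h5 : 2 * Real.sqrt X ≤ Real.sqrt 5 * Real.sqrt L := by
        have e1 : Real.sqrt 5 * Real.sqrt L = Real.sqrt (5 * L) :=
          (Real.sqrt_mul (by norm_num) L).symm
        have e2 : (2 : ℝ) * Real.sqrt (5 / 4 * L) = Real.sqrt (4 * (5 / 4 * L)) := by
          rw [Real.sqrt_mul (by norm_num : (0:ℝ) ≤ 4),
            show Real.sqrt 4 = 2 by
              rw [show (4:ℝ) = 2 ^ 2 by norm_num, Real.sqrt_sq (by norm_num : (0:ℝ) ≤ 2)]]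
        have e3 : (4 : ℝ) * (5 / 4 * L) = 5 * L := by ring
        have h1 : Real.sqrt X ≤ Real.sqrt (5 / 4 * L) := Real.sqrt_le_sqrt hX54
        rw [e1, ← e3, ← e2]
        linarith
      have hzlb : Real.sqrt L / Real.sqrt 5 ≤ ‖z‖ := by
        refine le_trans ?_ hz_abs_lb
        rw [div_le_div_iff₀ (Real.sqrt_pos.2 (by norm_num : (0:ℝ) < 5)) (by positivity)]
        have hLL : Real.sqrt L * Real.sqrt L = L := Real.mul_self_sqrt hL0.le
        have hmul : Real.sqrt L * (2 * Real.sqrt X) ≤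
            Real.sqrt L * (Real.sqrt 5 * Real.sqrt L) :=
          mul_le_mul_of_nonneg_left h5 (Real.sqrt_nonneg L)
        have heq : Real.sqrt L * (Real.sqrt 5 * Real.sqrt L) = L * Real.sqrt 5 := by
          rw [show Real.sqrt L * (Real.sqrt 5 * Real.sqrt L)
              = Real.sqrt L * Real.sqrt L * Real.sqrt 5 from by ring, hLL]
        linarith
      have h3 : ‖Complex.exp (-(a : ℝ) * y) *
          ((1 - Complex.exp (-(γ - ((a : ℝ) : ℂ)) * y)) / (γ - ((a : ℝ) : ℂ)))‖
          ≤ 2 * Real.sqrt 5 / Real.sqrt L := by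
        calc ‖Complex.exp (-(a : ℝ) * y) *
              ((1 - Complex.exp (-(γ - ((a : ℝ) : ℂ)) * y)) / (γ - ((a : ℝ) : ℂ)))‖
            ≤ Real.exp (-(a * y)) * (2 * min 1 (‖z‖ * y) / ‖z‖) :=
              hmain
          _ ≤ 1 * (2 * 1 / ‖z‖) := by
              gcongr
              exact min_le_left _ _
          _ = 2 / ‖z‖ := by ring
          _ ≤ 2 * Real.sqrt 5 / Real.sqrt L := by
              rw [div_le_div_iff₀ hz0 (Real.sqrt_pos.2 hL0)]
              have h6 : Real.sqrt L ≤ ‖z‖ * Real.sqrt 5 :=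
                (div_le_iff₀ (Real.sqrt_pos.2 (by norm_num : (0:ℝ) < 5))).1 hzlb
              have h7 := mul_le_mul_of_nonneg_left h6 (by norm_num : (0:ℝ) ≤ 2)
              linarith
      calc (‖Complex.exp (-(a : ℝ) * y) *
            ((1 - Complex.exp (-(γ - ((a : ℝ) : ℂ)) * y)) / (γ - ((a : ℝ) : ℂ)))‖) ^ 2
          ≤ (2 * Real.sqrt 5 / Real.sqrt L) ^ 2 := by
            gcongr
        _ = 20 / L := by
            rw [div_pow, mul_pow, Real.sq_sqrt (by norm_num : (0:ℝ) ≤ 5),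
              Real.sq_sqrt hL0.le]
            norm_num
  -- integrate the constant bound
  have hint : (∫ y in Set.Ioo (0 : ℝ) 1,
      (‖Complex.exp (-(a : ℝ) * y) *
        ((1 - Complex.exp (-(γ - ((a : ℝ) : ℂ)) * y)) / (γ - ((a : ℝ) : ℂ)))‖) ^ 2)
      ≤ 20 / L := by
    have hvol : volume (Set.Ioo (0 : ℝ) 1) < ⊤ := by
      rw [Real.volume_Ioo]; exact ENNReal.ofReal_lt_top
    have hb : ‖∫ y in Set.Ioo (0 : ℝ) 1,
        (‖Complex.exp (-(a : ℝ) * y) *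
          ((1 - Complex.exp (-(γ - ((a : ℝ) : ℂ)) * y)) / (γ - ((a : ℝ) : ℂ)))‖) ^ 2‖
        ≤ (20 / L) * (volume (Set.Ioo (0 : ℝ) 1)).toReal :=
      norm_setIntegral_le_of_norm_le_const hvol
        (fun x hx => by
          rw [Real.norm_eq_abs, abs_of_nonneg (by positivity)]
          exact hpt x hx)
    have hvol1 : (volume (Set.Ioo (0 : ℝ) 1)).toReal = 1 := by
      rw [Real.volume_Ioo]; norm_num
    rw [hvol1, mul_one] at hb
    exact le_trans (le_abs_self _) hb
  refine le_trans (Real.sqrt_le_sqrt hint) ?_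
  have hlam0 : 0 < lam := lt_of_lt_of_le one_pos hlam
  have hs : Real.sqrt (20 / L) ≤ 5 / Real.sqrt L := by
    rw [Real.sqrt_div (by norm_num : (0:ℝ) ≤ 20) L]
    have h20 : Real.sqrt 20 ≤ 5 := by
      rw [show (5:ℝ) = Real.sqrt 25 by
        rw [show (25:ℝ) = 5 ^ 2 by norm_num, Real.sqrt_sq (by norm_num : (0:ℝ) ≤ 5)]]
      exact Real.sqrt_le_sqrt (by norm_num)
    gcongr
  calc Real.sqrt (20 / L) ≤ 5 / Real.sqrt L := hs
    _ = 5 * lam ^ (-(1 : ℝ) / 2) * J ^ (-(1 : ℝ) / 3) := by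
      have e1 : lam ^ (-(1 : ℝ) / 2) = (lam ^ ((1 : ℝ) / 2))⁻¹ := by
        rw [show (-(1 : ℝ) / 2) = -((1 : ℝ) / 2) by norm_num, Real.rpow_neg hlam0.le]
      have e2 : J ^ (-(1 : ℝ) / 3) = (J ^ ((1 : ℝ) / 3))⁻¹ := by
        rw [show (-(1 : ℝ) / 3) = -((1 : ℝ) / 3) by norm_num, Real.rpow_neg hJ0.le]
      have e3 : Real.sqrt L = lam ^ ((1 : ℝ) / 2) * J ^ ((1 : ℝ) / 3) := by
        rw [hL_def, Real.sqrt_mul hlam0.le, Real.sqrt_eq_rpow, Real.sqrt_eq_rpow,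
          ← Real.rpow_mul hJ0.le]
        norm_num
      rw [e1, e2, e3]
      have p1 : 0 < lam ^ ((1 : ℝ) / 2) := Real.rpow_pos_of_pos hlam0 _
      have p2 : 0 < J ^ ((1 : ℝ) / 3) := Real.rpow_pos_of_pos hJ0 _
      field_simp
end
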